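/- Degree bound in q: deg_q A_n(q^K t) ≤ (K^2−K)/2 + (3n^2+n)/2 when 0 ≤ K ≤ n, and deg_q A_n(q^K t) ≤ n^2 + nK when K > n. -/
import Mathlib


open Finset

/-- q-Pochhammer symbol `(a)_n = ∏_{j=0}^{n-1} (1 - a q^j)`. -/
noncomputable def qPoch (q a : ℝ) (n : ℕ) : ℝ := ∏ j ∈ Finset.range n, (1 - a * q ^ j)

/-- q-exponential `E_q(t) = ∏_{k=0}^∞ (1 - q^k t)⁻¹`. -/
noncomputable def qExp (q t : ℝ) : ℝ := ∏' k : ℕ, (1 - q ^ k * t)⁻¹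

/-- q-binomial coefficient. -/
noncomputable def qBinom (q : ℝ) (n k : ℕ) : ℝ :=
  qPoch q q n / (qPoch q q k * qPoch q q (n - k))

/-- Padé numerator polynomial `A_n(t)`. -/
noncomputable def padeA (q : ℝ) (n : ℕ) (t : ℝ) : ℝ :=
  ∑ k ∈ Finset.range (n + 1),
    qBinom q n k * q ^ (k * n) * qPoch q (q ^ (n + 1)) (n - k) * t ^ k

/-- Padé denominator polynomial `B_n(t)`. -/
noncomputable def padeB (q : ℝ) (n : ℕ) (t : ℝ) : ℝ :=
  ∑ k ∈ Finset.range (n + 1),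
    qBinom q n k * q ^ (k * (k - 1) / 2) * qPoch q (q ^ (n + 1)) (n - k) * (-t) ^ k

/-- Padé remainder `S_n(t)`. -/
noncomputable def padeS (q : ℝ) (n : ℕ) (t : ℝ) : ℝ :=
  (-1) ^ n * t ^ (2 * n + 1) * q ^ ((3 * n ^ 2 + n) / 2) *
    (qPoch q q n / qPoch q q (2 * n + 1)) *
    ∑' k : ℕ, qPoch q (q ^ (n + 1)) k * t ^ k / (qPoch q q k * qPoch q (q ^ (2 * n + 2)) k)

/-- Evaluate `P ∈ ℤ[t][q]` (outer variable `q`, inner variable `t`) at real `q, t`. -/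
noncomputable def evalTQ (P : Polynomial (Polynomial ℤ)) (q t : ℝ) : ℝ :=
  Polynomial.eval q (P.map (Polynomial.eval₂RingHom (Int.castRingHom ℝ) t))

/-! ### Auxiliary development -/

/-- Gaussian binomial polynomial. -/
noncomputable def gb : ℕ → ℕ → Polynomial ℤ
  | _, 0 => 1
  | 0, _+1 => 0
  | n+1, k+1 => gb n k + Polynomial.X ^ (k+1) * gb n (k+1)

lemma gb_zero (n : ℕ) : gb n 0 = 1 := by cases n <;> rfl
lemma gb_succ_succ (n k : ℕ) :
    gb (n+1) (k+1) = gb n k + Polynomial.X ^ (k+1) * gb n (k+1) := rfl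

lemma gb_zero_of_lt : ∀ n k, n < k → gb n k = 0 := by
  intro n
  induction n with
  | zero => intro k hk; match k, hk with | k+1, _ => rfl
  | succ n ih =>
    intro k hk
    match k, hk with
    | k+1, hk =>
      rw [gb_succ_succ, ih k (by omega), ih (k+1) (by omega)]; ring

lemma gb_natDegree_le : ∀ n k, (gb n k).natDegree ≤ k * (n - k) := by
  intro n
  induction n with
  | zero => intro k; match k with
    | 0 => simp [gb_zero]
    | k+1 => show (0 : Polynomial ℤ).natDegree ≤ _ ; simp
  | succ n ih =>
    intro k
    match k with
    | 0 => simp [gb_zero]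
    | k+1 =>
      rw [gb_succ_succ]
      rcases le_or_gt (k+1) n with h | h
      · refine (Polynomial.natDegree_add_le _ _).trans (max_le ?_ ?_)
        · refine (ih k).trans ?_
          have : n + 1 - (k+1) = n - k := by omega
          rw [this]
          exact Nat.mul_le_mul_right _ (by omega)
        · refine (Polynomial.natDegree_mul_le).trans ?_
          have h1 := ih (k+1)
          have h2 : (Polynomial.X ^ (k+1) : Polynomial ℤ).natDegree ≤ k+1 := by simp
          have h3 : n + 1 - (k+1) = (n - (k+1)) + 1 := by omega
          rw [h3, Nat.mul_succ]
          omega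
      · rw [gb_zero_of_lt n (k+1) h]
        refine (Polynomial.natDegree_add_le _ _).trans (max_le ?_ ?_)
        · refine (ih k).trans ?_
          have : n - k = 0 := by omega
          simp [this]
        · simp

lemma qPoch_succ (q a : ℝ) (m : ℕ) : qPoch q a (m+1) = qPoch q a m * (1 - a * q ^ m) :=
  Finset.prod_range_succ _ _

lemma qPoch_q_ne_zero {q : ℝ} (hq : |q| < 1) (m : ℕ) : qPoch q q m ≠ 0 := by
  refine Finset.prod_ne_zero_iff.mpr fun j _ => ?_
  intro h
  have h2 : q * q ^ j = 1 := by linarith [sub_eq_zero.mp h]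
  have : |q * q ^ j| < 1 := by
    rw [abs_mul, abs_pow]
    calc |q| * |q| ^ j ≤ |q| * 1 := by
          refine mul_le_mul_of_nonneg_left ?_ (abs_nonneg q)
          exact pow_le_one₀ (abs_nonneg q) hq.le
      _ < 1 := by linarith
  rw [h2] at this; simp at this

lemma qBinom_pascal {q : ℝ} (hq : |q| < 1) (k d : ℕ) :
    qBinom q (k+1+d+1) (k+1) = qBinom q (k+d+1) k + q ^ (k+1) * qBinom q (k+d+1) (k+1) := by
  have e1 : k+1+d+1 - (k+1) = d+1 := by omega
  have e2 : k+d+1 - k = d+1 := by omega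
  have e3 : k+d+1 - (k+1) = d := by omega
  unfold qBinom
  rw [e1, e2, e3]
  have hn : qPoch q q (k+1+d+1) = qPoch q q (k+d+1) * (1 - q * q ^ (k+d+1)) := by
    rw [show k+1+d+1 = (k+d+1)+1 by omega]; exact qPoch_succ q q (k+d+1)
  have hk : qPoch q q (k+1) = qPoch q q k * (1 - q * q ^ k) := qPoch_succ q q k
  have hd : qPoch q q (d+1) = qPoch q q d * (1 - q * q ^ d) := qPoch_succ q q d
  rw [hn, hk, hd]
  have nk := qPoch_q_ne_zero hq k
  have nd := qPoch_q_ne_zero hq d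
  have nk1 : (1 - q * q ^ k) ≠ 0 := by
    have := qPoch_q_ne_zero hq (k+1); rw [hk] at this
    exact fun h => this (by rw [h, mul_zero])
  have nd1 : (1 - q * q ^ d) ≠ 0 := by
    have := qPoch_q_ne_zero hq (d+1); rw [hd] at this
    exact fun h => this (by rw [h, mul_zero])
  field_simp
  ring_nf

lemma qBinom_zero {q : ℝ} (hq : |q| < 1) (n : ℕ) : qBinom q n 0 = 1 := by
  unfold qBinom qPoch
  simp only [Nat.sub_zero, Finset.range_zero, Finset.prod_empty, one_mul]
  exact div_self (qPoch_q_ne_zero hq n)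

lemma qBinom_self {q : ℝ} (hq : |q| < 1) (n : ℕ) : qBinom q n n = 1 := by
  unfold qBinom
  rw [Nat.sub_self]
  have h0 : qPoch q q 0 = 1 := rfl
  rw [h0, mul_one]
  exact div_self (qPoch_q_ne_zero hq n)

lemma gb_eval {q : ℝ} (hq : |q| < 1) :
    ∀ n k, k ≤ n → Polynomial.aeval q (gb n k) = qBinom q n k := by
  intro n
  induction n with
  | zero =>
    intro k hk
    interval_cases k
    rw [gb_zero]; simp [qBinom_zero hq]
  | succ n ih =>
    intro k hk
    match k with
    | 0 => rw [gb_zero]; simp [qBinom_zero hq]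
    | k+1 =>
      rw [gb_succ_succ]
      rcases eq_or_lt_of_le hk with he | hlt
      · have hk' : k = n := by omega
        subst hk'
        rw [gb_zero_of_lt k (k+1) (by omega)]
        simp only [mul_zero, add_zero, map_add, map_mul, map_pow, Polynomial.aeval_X,
          map_zero, add_zero]
        rw [ih k le_rfl, qBinom_self hq, qBinom_self hq]
      · have hle : k + 1 ≤ n := by omega
        obtain ⟨d, hd⟩ : ∃ d, n = k + 1 + d := ⟨n - (k+1), by omega⟩
        subst hd
        simp only [map_add, map_mul, map_pow, Polynomial.aeval_X]
        rw [ih k (by omega), ih (k+1) (by omega),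
          show k+1+d = k+d+1 by omega, show (k+d+1)+1 = k+1+d+1 by omega]
        exact (qBinom_pascal hq k d).symm

/-- Pochhammer polynomial `∏_{j<m} (1 - X^{s+j})`. -/
noncomputable def pp (s m : ℕ) : Polynomial ℤ :=
  ∏ j ∈ Finset.range m, (1 - Polynomial.X ^ (s + j))

lemma pp_natDegree_le (s m : ℕ) : (pp s m).natDegree ≤ m * s + m * (m-1) / 2 := by
  refine (Polynomial.natDegree_prod_le _ _).trans ?_
  have h : ∀ j ∈ Finset.range m, ((1 : Polynomial ℤ) - Polynomial.X ^ (s+j)).natDegree ≤ s + j := by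
    intro j _
    refine (Polynomial.natDegree_sub_le _ _).trans ?_
    simp
  refine (Finset.sum_le_sum h).trans ?_
  rw [Finset.sum_add_distrib, Finset.sum_const, Finset.sum_range_id, smul_eq_mul,
    Finset.card_range]

lemma pp_eval (q : ℝ) (s m : ℕ) : Polynomial.aeval q (pp s m) = qPoch q (q ^ s) m := by
  unfold pp qPoch
  rw [map_prod]
  refine Finset.prod_congr rfl fun j _ => ?_
  simp [pow_add]

noncomputable def evalTQhom (q t : ℝ) : Polynomial (Polynomial ℤ) →+* ℝ :=
  (Polynomial.evalRingHom q).comp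
    (Polynomial.mapRingHom (Polynomial.eval₂RingHom (Int.castRingHom ℝ) t))

lemma evalTQ_eq (P : Polynomial (Polynomial ℤ)) (q t : ℝ) : evalTQ P q t = evalTQhom q t P := rfl

noncomputable def toTQ : Polynomial ℤ →+* Polynomial (Polynomial ℤ) :=
  Polynomial.mapRingHom Polynomial.C

lemma evalTQ_toTQ (p : Polynomial ℤ) (q t : ℝ) :
    evalTQhom q t (toTQ p) = Polynomial.aeval q p := by
  unfold evalTQhom toTQ
  simp only [RingHom.comp_apply, Polynomial.coe_mapRingHom, Polynomial.map_map]
  rw [Polynomial.aeval_def, Polynomial.eval₂_eq_eval_map]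
  simp only [Polynomial.coe_evalRingHom]
  have : ((Polynomial.eval₂RingHom (Int.castRingHom ℝ) t).comp Polynomial.C) = algebraMap ℤ ℝ := by
    ext a : 1
    simp
  rw [this]

lemma evalTQ_CXk (k : ℕ) (q t : ℝ) :
    evalTQhom q t (Polynomial.C (Polynomial.X ^ k)) = t ^ k := by
  unfold evalTQhom
  simp

/-- integer product of consecutive integers is nonneg -/
lemma int_consec (x : ℤ) : 0 ≤ x * (x - 1) := by
  rcases le_or_gt 1 x with h | h
  · exact mul_nonneg (by omega) (by omega)
  · have h1 : 0 ≤ -x := by omega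
    have h2 : (0:ℤ) ≤ 1 - x := by omega
    nlinarith [mul_nonneg h1 h2]

lemma consec_nat (m : ℕ) : ∃ c : ℕ, m * (m-1) = 2*c ∧ 2*(c:ℤ) = (m:ℤ)*m - m := by
  cases m with
  | zero => exact ⟨0, by simp⟩
  | succ x =>
    rcases Nat.even_or_odd x with ⟨y, rfl⟩ | ⟨y, rfl⟩
    · refine ⟨y*(y+y+1), ?_, ?_⟩
      · simp only [Nat.succ_sub_one]; ring
      · push_cast; ring
    · refine ⟨(y+1)*(2*y+1), ?_, ?_⟩
      · simp only [Nat.succ_sub_one]; ring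
      · push_cast; ring

lemma consecSq_nat (K : ℕ) : ∃ a : ℕ, K^2 - K = 2*a ∧ 2*(a:ℤ) = (K:ℤ)^2 - K := by
  obtain ⟨c, h1, h2⟩ := consec_nat K
  refine ⟨c, ?_, ?_⟩
  · rw [pow_two, ← Nat.mul_sub_one, h1]
  · rw [h2]; ring

lemma threeN (n : ℕ) : ∃ b : ℕ, 3*n^2 + n = 2*b ∧ 2*(b:ℤ) = 3*(n:ℤ)^2 + n := by
  rcases Nat.even_or_odd n with ⟨x, rfl⟩ | ⟨x, rfl⟩
  · refine ⟨6*x^2+x, by ring, by push_cast; ring⟩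
  · refine ⟨6*x^2+7*x+2, by ring, by push_cast; ring⟩

lemma arith_main (n K k : ℕ) (hk : k ≤ n) :
    k * (n - k) + (k * n + K * k) + ((n - k) * (n + 1) + (n - k) * ((n - k) - 1) / 2) ≤
      if K ≤ n then (K ^ 2 - K) / 2 + (3 * n ^ 2 + n) / 2 else n ^ 2 + n * K := by
  obtain ⟨m, rfl⟩ : ∃ m, n = k + m := ⟨n - k, by omega⟩
  have e1 : k + m - k = m := by omega
  rw [e1]
  obtain ⟨c, hc, hc'⟩ := consec_nat m
  obtain ⟨b, hb, hb'⟩ := threeN (k+m)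
  have hcdiv : 2*c/2 = c := by omega
  have hbdiv : 2*b/2 = b := by omega
  rw [hc, hcdiv]
  split_ifs with hKn
  · obtain ⟨a, ha, ha'⟩ := consecSq_nat K
    have hadiv : 2*a/2 = a := by omega
    rw [ha, hadiv, hb, hbdiv]
    have hKn' : (K:ℤ) ≤ (k:ℤ) + m := by exact_mod_cast hKn
    zify
    nlinarith [int_consec ((K:ℤ) - (k:ℤ)), ha', hb', hc']
  · have hK' : (k:ℤ) + m + 1 ≤ (K:ℤ) := by exact_mod_cast (by omega : k + m + 1 ≤ K)
    zify
    have hprod : 0 ≤ (m:ℤ) * (2*(K:ℤ) - 2*k - m - 1) :=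
      mul_nonneg (by positivity) (by linarith)
    nlinarith [hc', hprod]

/-- The explicit polynomial representing `A_n(q^K t)`. -/
noncomputable def Qp (n K : ℕ) : Polynomial (Polynomial ℤ) :=
  ∑ k ∈ Finset.range (n+1),
    toTQ (gb n k * Polynomial.X ^ (k*n + K*k) * pp (n+1) (n-k)) * Polynomial.C (Polynomial.X ^ k)

lemma Qp_eval {q : ℝ} (hq : |q| < 1) (n K : ℕ) (t : ℝ) :
    evalTQ (Qp n K) q t = padeA q n (q ^ K * t) := by
  rw [evalTQ_eq, Qp, map_sum, padeA]
  refine Finset.sum_congr rfl fun k hk => ?_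
  have hkn : k ≤ n := by simpa using Nat.lt_succ_iff.mp (Finset.mem_range.mp hk)
  rw [map_mul, evalTQ_toTQ, evalTQ_CXk, map_mul, map_mul, map_pow, Polynomial.aeval_X,
    gb_eval hq n k hkn, pp_eval]
  rw [mul_pow, ← pow_mul, pow_add, pow_mul]
  ring

lemma Qp_natDegree_le (n K : ℕ) :
    (Qp n K).natDegree ≤ if K ≤ n then (K ^ 2 - K) / 2 + (3 * n ^ 2 + n) / 2
      else n ^ 2 + n * K := by
  refine Polynomial.natDegree_sum_le_of_forall_le _ _ fun k hk => ?_
  have hkn : k ≤ n := by simpa using Nat.lt_succ_iff.mp (Finset.mem_range.mp hk)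
  refine le_trans ?_ (arith_main n K k hkn)
  refine (Polynomial.natDegree_mul_le).trans ?_
  have h1 : (Polynomial.C (Polynomial.X ^ k) :
      Polynomial (Polynomial ℤ)).natDegree = 0 := Polynomial.natDegree_C _
  rw [h1, add_zero]
  refine (Polynomial.natDegree_map_le).trans ?_
  refine (Polynomial.natDegree_mul_le).trans ?_
  have h2 := (Polynomial.natDegree_mul_le
    (p := gb n k) (q := (Polynomial.X : Polynomial ℤ) ^ (k*n + K*k)))
  refine add_le_add (h2.trans ?_) (pp_natDegree_le (n+1) (n-k))
  exact add_le_add (gb_natDegree_le n k) (by simp)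

/-- `deg_q A_n(q^K t) ≤ (K²-K)/2 + (3n²+n)/2` for `K ≤ n` and
`deg_q A_n(q^K t) ≤ n² + nK` for `K > n`. -/
theorem padeA_q_degree_bound (n K : ℕ) (P : Polynomial (Polynomial ℤ))
    (hP : ∀ q t : ℝ, 0 < |q| → |q| < 1 → evalTQ P q t = padeA q n (q ^ K * t)) :
    P.natDegree ≤ if K ≤ n then (K ^ 2 - K) / 2 + (3 * n ^ 2 + n) / 2
      else n ^ 2 + n * K := by
  have hPQ : P = Qp n K := by
    rw [← sub_eq_zero]
    have h1 : ∀ t : ℝ,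
        (P - Qp n K).map (Polynomial.eval₂RingHom (Int.castRingHom ℝ) t) = 0 := by
      intro t
      apply Polynomial.eq_zero_of_infinite_isRoot
      refine Set.Infinite.mono ?_
        (Set.infinite_coe_iff.mp (Set.Ioo.infinite (by norm_num : (0:ℝ) < 1/2)))
      intro q hq
      have h0 : (0:ℝ) < q := hq.1
      have habs : |q| = q := abs_of_pos h0
      have h01 : 0 < |q| := by rw [habs]; exact h0
      have h11 : |q| < 1 := by rw [habs]; linarith [hq.2]
      show Polynomial.IsRoot _ q
      unfold Polynomial.IsRoot
      rw [Polynomial.map_sub]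
      rw [Polynomial.eval_sub]
      have e1 : Polynomial.eval q
          (P.map (Polynomial.eval₂RingHom (Int.castRingHom ℝ) t)) = evalTQ P q t := rfl
      have e2 : Polynomial.eval q
          ((Qp n K).map (Polynomial.eval₂RingHom (Int.castRingHom ℝ) t))
          = evalTQ (Qp n K) q t := rfl
      rw [e1, e2, hP q t h01 h11, Qp_eval h11]
      ring
    rw [Polynomial.ext_iff]
    intro i
    rw [Polynomial.coeff_zero]
    have h2 : ∀ t : ℝ,
        Polynomial.eval₂ (Int.castRingHom ℝ) t ((P - Qp n K).coeff i) = 0 := by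
      intro t
      have := congrArg (fun p => Polynomial.coeff p i) (h1 t)
      simpa [Polynomial.coeff_map] using this
    have h3 : ((P - Qp n K).coeff i).map (Int.castRingHom ℝ) = 0 := by
      apply Polynomial.eq_zero_of_infinite_isRoot
      have : {x : ℝ | Polynomial.IsRoot (((P - Qp n K).coeff i).map (Int.castRingHom ℝ)) x}
          = Set.univ := by
        refine Set.eq_univ_of_forall fun t => ?_
        show Polynomial.IsRoot _ t
        unfold Polynomial.IsRoot
        rw [← Polynomial.eval₂_eq_eval_map]
        exact h2 t
      rw [this]
      exact Set.infinite_univ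
    have h4 : (P - Qp n K).coeff i = 0 :=
      Polynomial.map_injective _ Int.cast_injective
        (by rw [h3, Polynomial.map_zero])
    exact h4
  rw [hPQ]
  exact Qp_natDegree_le n K
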